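/- arXiv:2106.12725 — 2 statements merged into one kernel-verified Lean document; each statement's English description precedes it below -/
import Mathlib

section
/- Let j ∈ R_{s,H} (for some string H and integer s ≥ 0). For any j′ ∈ [1..n], LCE(j,j′) ≥ 3τ−1 holds if and only if j′ ∈ R_{s,H}. Moreover, if j′ ∈ R_{s,H} then, letting t = rend(j) − j and t′ = rend(j′) − j′, it holds LCE(j,j′) ≥ min(t,t′) and: (1) if type(j) ≠ type(j′), then T[j..n] ≺ T[j′..n] if and only if type(j) < type(j′); (2) if type(j) = type(j′) = −1 and t ≠ t′, then T[j..n] ≺ T[j′..n] if and only if t < t′; (3) if type(j) = type(j′) = +1 and t ≠ t′, then T[j..n] ≺ T[j′..n] if and only if t > t′; (4) if type(j) ≠ type(j′) or t ≠ t′, then LCE(j,j′) = min(t,t′). -/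
open scoped Classical

namespace CSA

/-- Character of a 1-indexed string at position `i` (junk value 0 out of range). -/
def idx (S : List ℕ) (i : ℕ) : ℕ := S.getD (i - 1) 0

/-- Substring `S[i..j)` in the 1-indexed, half-open convention. -/
def sub (S : List ℕ) (i j : ℕ) : List ℕ := (S.drop (i - 1)).take (j - i)

/-- Suffix `S[i..|S|]` (1-indexed). -/
def suf (S : List ℕ) (i : ℕ) : List ℕ := S.drop (i - 1)

/-- Length of the longest common prefix of two strings. -/
def lcp (A B : List ℕ) : ℕ := ((A.zip B).takeWhile fun p => p.1 == p.2).length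

/-- `LCE T j₁ j₂` is the length of the longest common prefix of `T[j₁..n]` and `T[j₂..n]`. -/
def LCE (T : List ℕ) (j₁ j₂ : ℕ) : ℕ := lcp (suf T j₁) (suf T j₂)

/-- `p` is a period of `S`. -/
def IsPeriod (S : List ℕ) (p : ℕ) : Prop :=
  1 ≤ p ∧ p ≤ S.length ∧ ∀ i, i + p < S.length → S.getD i 0 = S.getD (i + p) 0

/-- The shortest period of `S`. -/
noncomputable def per (S : List ℕ) : ℕ := sInf {p | IsPeriod S p}

/-- `R = {i ∈ [1..n−3τ+2] : per(T[i..i+3τ−1)) ≤ τ/3}`. -/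
noncomputable def R (T : List ℕ) (τ : ℕ) : Set ℕ :=
  {i | 1 ≤ i ∧ i + 3 * τ ≤ T.length + 2 ∧ 3 * per (sub T i (i + 3 * τ - 1)) ≤ τ}

/-- `rend(j) = min{j′ ≥ j : j′ ∉ R} + 3τ − 2`. -/
noncomputable def rend (T : List ℕ) (τ j : ℕ) : ℕ :=
  sInf {j' | j ≤ j' ∧ j' ∉ R T τ} + 3 * τ - 2

/-- `L-root(j)`: lexicographically smallest among `{T[j+t..j+t+p) : 0 ≤ t < p}`
where `p = per(T[j..j+3τ−1))`. -/
noncomputable def Lroot (T : List ℕ) (τ j : ℕ) : List ℕ :=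
  WithTop.untopD [] ((Finset.range (per (sub T j (j + 3 * τ - 1)))).image fun t =>
      sub T (j + t) (j + t + per (sub T j (j + 3 * τ - 1)))).min

/-- `L-head(j)`: the (unique) `s ∈ [0..p)` with `T[j+s..j+s+p) = L-root(j)`. -/
noncomputable def Lhead (T : List ℕ) (τ j : ℕ) : ℕ :=
  sInf {s | s < per (sub T j (j + 3 * τ - 1)) ∧
    sub T (j + s) (j + s + per (sub T j (j + 3 * τ - 1))) = Lroot T τ j}

noncomputable def Lexp (T : List ℕ) (τ j : ℕ) : ℕ :=
  (rend T τ j - j - Lhead T τ j) / per (sub T j (j + 3 * τ - 1))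

noncomputable def Ltail (T : List ℕ) (τ j : ℕ) : ℕ :=
  (rend T τ j - j - Lhead T τ j) % per (sub T j (j + 3 * τ - 1))

noncomputable def rendfull (T : List ℕ) (τ j : ℕ) : ℕ := rend T τ j - Ltail T τ j

/-- `type(j) = +1` if `rend(j) ≤ n` and `T[rend(j)] > T[rend(j)−p]`, and `−1` otherwise. -/
noncomputable def typ (T : List ℕ) (τ j : ℕ) : ℤ :=
  if rend T τ j ≤ T.length ∧
      idx T (rend T τ j - per (sub T j (j + 3 * τ - 1))) < idx T (rend T τ j)
    then 1 else -1

noncomputable def Rminus (T : List ℕ) (τ : ℕ) : Set ℕ := {j ∈ R T τ | typ T τ j = -1}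

noncomputable def RH (T : List ℕ) (τ : ℕ) (H : List ℕ) : Set ℕ :=
  {j ∈ R T τ | Lroot T τ j = H}

noncomputable def RsH (T : List ℕ) (τ s : ℕ) (H : List ℕ) : Set ℕ :=
  {j ∈ R T τ | Lroot T τ j = H ∧ Lhead T τ j = s}

noncomputable def RminusH (T : List ℕ) (τ : ℕ) (H : List ℕ) : Set ℕ :=
  Rminus T τ ∩ RH T τ H

noncomputable def RminusSH (T : List ℕ) (τ s : ℕ) (H : List ℕ) : Set ℕ :=
  Rminus T τ ∩ RsH T τ s H

noncomputable def Rprime (T : List ℕ) (τ : ℕ) : Set ℕ := {j ∈ R T τ | j - 1 ∉ R T τ}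

/-- `Occ(P,S)`: the set of (1-indexed) starting positions of occurrences of `P` in `S`. -/
def OccSet (P S : List ℕ) : Set ℕ :=
  {j | 1 ≤ j ∧ j + P.length ≤ S.length + 1 ∧ sub S j (j + P.length) = P}

noncomputable def RangeBeg (P T : List ℕ) : ℕ :=
  Set.ncard {i | 1 ≤ i ∧ i ≤ T.length ∧ suf T i < P}

noncomputable def RangeEnd (P T : List ℕ) : ℕ := RangeBeg P T + (OccSet P T).ncard

/-- `ISA[j]`: the lexicographic rank of the suffix `T[j..n]` among all suffixes of `T`. -/
noncomputable def ISA (T : List ℕ) (j : ℕ) : ℕ :=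
  Set.ncard {j' | 1 ≤ j' ∧ j' ≤ T.length ∧ suf T j' ≤ suf T j}

/-- `succ_S(i) = min{j ∈ S ∪ {n−2τ+2} : j ≥ i}`. -/
noncomputable def succS (T : List ℕ) (τ : ℕ) (Sync : Set ℕ) (i : ℕ) : ℕ :=
  sInf {j | i ≤ j ∧ (j ∈ Sync ∨ j = T.length + 2 - 2 * τ)}

/-- The set `D` of distinguishing prefixes. -/
noncomputable def Dset (T : List ℕ) (τ : ℕ) (Sync : Set ℕ) : Set (List ℕ) :=
  {X | ∃ i, 1 ≤ i ∧ i + 3 * τ ≤ T.length + 2 ∧ i ∉ R T τ ∧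
    X = sub T i (succS T τ Sync i + 2 * τ)}

/-- `T^∞[i] = T[1 + ((i−1) mod n)]` for `i : ℤ`. -/
def tinf (T : List ℕ) (i : ℤ) : ℕ := idx T (((i - 1).emod (T.length : ℤ)).toNat + 1)

/-- `W[i]`: the reverse of `T^∞[s^lex_i − τ .. s^lex_i + 2τ)`. -/
def Wstr (T : List ℕ) (τ : ℕ) (slex : ℕ → ℕ) (i : ℕ) : List ℕ :=
  ((List.range (3 * τ)).map fun k => tinf T ((slex i : ℤ) - (τ : ℤ) + (k : ℤ))).reverse

/- Pattern versions of the `L`-decomposition functions. -/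

noncomputable def perP (τ : ℕ) (P : List ℕ) : ℕ := per (P.take (3 * τ - 1))

/-- A pattern is periodic if `|P| ≥ 3τ−1` and `per(P[1..3τ−1]) ≤ τ/3`. -/
noncomputable def Periodic (τ : ℕ) (P : List ℕ) : Prop :=
  3 * τ - 1 ≤ P.length ∧ 3 * perP τ P ≤ τ

noncomputable def pend (τ : ℕ) (P : List ℕ) : ℕ :=
  1 + perP τ P + lcp P (P.drop (perP τ P))

noncomputable def LrootP (τ : ℕ) (P : List ℕ) : List ℕ :=
  WithTop.untopD [] ((Finset.range (perP τ P)).image fun t => (P.drop t).take (perP τ P)).min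

noncomputable def LheadP (τ : ℕ) (P : List ℕ) : ℕ :=
  sInf {s | s < perP τ P ∧ (P.drop s).take (perP τ P) = LrootP τ P}

noncomputable def LexpP (τ : ℕ) (P : List ℕ) : ℕ :=
  (pend τ P - 1 - LheadP τ P) / perP τ P

noncomputable def LtailP (τ : ℕ) (P : List ℕ) : ℕ :=
  (pend τ P - 1 - LheadP τ P) % perP τ P

noncomputable def pendfullP (τ : ℕ) (P : List ℕ) : ℕ := pend τ P - LtailP τ P

noncomputable def typP (τ : ℕ) (P : List ℕ) : ℤ :=
  if pend τ P ≤ P.length ∧ idx P (pend τ P - perP τ P) < idx P (pend τ P)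
    then 1 else -1

/-- `pow(H)`: the prefix of length `|H|·⌈τ/|H|⌉` of `H^∞`. -/
def powS (τ : ℕ) (H : List ℕ) : List ℕ :=
  (List.replicate ((τ + H.length - 1) / H.length) H).flatten


section AuxLemmas

lemma lcp_nil_left (B : List ℕ) : lcp [] B = 0 := by simp [lcp]
lemma lcp_nil_right (A : List ℕ) : lcp A [] = 0 := by simp [lcp]
lemma lcp_cons (a b : ℕ) (A B : List ℕ) :
    lcp (a::A) (b::B) = if a = b then lcp A B + 1 else 0 := by
  by_cases h : a = b <;>
    simp [lcp, List.zip_cons_cons, List.takeWhile_cons, h, List.zip]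

lemma lcp_le_left (A B : List ℕ) : lcp A B ≤ A.length := by
  induction A generalizing B with
  | nil => simp [lcp_nil_left]
  | cons a A ih =>
    cases B with
    | nil => simp [lcp_nil_right]
    | cons b B =>
      rw [lcp_cons]; split
      · simpa using ih B
      · simp

lemma lcp_comm (A B : List ℕ) : lcp A B = lcp B A := by
  induction A generalizing B with
  | nil => simp [lcp_nil_left, lcp_nil_right]
  | cons a A ih =>
    cases B with
    | nil => simp [lcp_nil_left, lcp_nil_right]
    | cons b B => rw [lcp_cons, lcp_cons, ih B]; by_cases h : a = b <;> simp [h, Ne.symm, eq_comm]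

lemma lcp_le_right (A B : List ℕ) : lcp A B ≤ B.length := by
  rw [lcp_comm]; exact lcp_le_left B A

lemma getD_eq_of_lt_lcp {A B : List ℕ} {i : ℕ} (h : i < lcp A B) :
    A.getD i 0 = B.getD i 0 := by
  induction A generalizing B i with
  | nil => simp [lcp_nil_left] at h
  | cons a A ih =>
    cases B with
    | nil => simp [lcp_nil_right] at h
    | cons b B =>
      rw [lcp_cons] at h
      split at h
      · cases i with
        | zero => simpa using ‹a = b›
        | succ i => simpa using ih (by omega)
      · omega

lemma le_lcp {A B : List ℕ} {k : ℕ} (ha : k ≤ A.length) (hb : k ≤ B.length)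
    (h : ∀ i < k, A.getD i 0 = B.getD i 0) : k ≤ lcp A B := by
  induction A generalizing B k with
  | nil => simp at ha; omega
  | cons a A ih =>
    cases B with
    | nil => simp at hb; omega
    | cons b B =>
      cases k with
      | zero => omega
      | succ k =>
        have h0 : a = b := by simpa using h 0 (by omega)
        rw [lcp_cons, if_pos h0]
        have := ih (k := k) (by simpa using ha) (by simpa using hb)
          (fun i hi => by simpa using h (i+1) (by omega))
        omega

lemma lcp_le_of_ne {A B : List ℕ} {k : ℕ} (h : A.getD k 0 ≠ B.getD k 0) :
    lcp A B ≤ k := by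
  by_contra hc
  exact h (getD_eq_of_lt_lcp (by omega))

lemma take_eq_of_le_lcp {A B : List ℕ} {k : ℕ} (h : k ≤ lcp A B) :
    A.take k = B.take k := by
  have ha : k ≤ A.length := le_trans h (lcp_le_left A B)
  have hb : k ≤ B.length := le_trans h (lcp_le_right A B)
  apply List.ext_getElem (by simp; omega)
  intro i h1 h2
  have : A.getD i 0 = B.getD i 0 := getD_eq_of_lt_lcp (by simp at h1; omega)
  simp only [List.getD_eq_getElem?_getD] at this
  simp only [List.length_take] at h1
  rw [List.getElem_take, List.getElem_take]
  have hA : A[i]? = some A[i] := List.getElem?_eq_getElem (by omega)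
  have hB : B[i]? = some B[i] := List.getElem?_eq_getElem (by omega)
  rw [hA, hB] at this
  simpa using this

lemma lex_lt_of_getD {A B : List ℕ} {k : ℕ}
    (hk : ∀ i < k, A.getD i 0 = B.getD i 0)
    (ha : k < A.length) (hb : k < B.length) (h : A.getD k 0 < B.getD k 0) :
    A < B := by
  induction k generalizing A B with
  | zero =>
    cases A with
    | nil => simp at ha
    | cons a A =>
      cases B with
      | nil => simp at hb
      | cons b B => exact List.Lex.rel (by simpa using h)
  | succ k ih =>
    cases A with
    | nil => simp at ha
    | cons a A =>
      cases B with
      | nil => simp at hb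
      | cons b B =>
        have h0 : a = b := by simpa using hk 0 (by omega)
        subst h0
        exact List.Lex.cons (ih (fun i hi => by simpa using hk (i+1) (by omega))
          (by simpa using ha) (by simpa using hb) (by simpa using h))

lemma lex_lt_of_prefix {A B : List ℕ} (h : A.length < B.length)
    (hk : ∀ i < A.length, A.getD i 0 = B.getD i 0) : A < B := by
  induction A generalizing B with
  | nil =>
    cases B with
    | nil => simp at h
    | cons b B => exact List.Lex.nil
  | cons a A ih =>
    cases B with
    | nil => simp at h
    | cons b B =>
      have h0 : a = b := by simpa using hk 0 (by simp)
      subst h0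
      exact List.Lex.cons (ih (by simpa using h)
        (fun i hi => by simpa using hk (i+1) (by simpa using hi)))

-- translation lemmas
lemma suf_getD (T : List ℕ) {j : ℕ} (hj : 1 ≤ j) (i : ℕ) :
    (suf T j).getD i 0 = idx T (j + i) := by
  simp only [suf, idx, List.getD_eq_getElem?_getD, List.getElem?_drop]
  congr 2
  omega

lemma suf_length (T : List ℕ) (j : ℕ) : (suf T j).length = T.length - (j - 1) := by
  simp [suf]

lemma sub_getD (T : List ℕ) {a b i : ℕ} (ha : 1 ≤ a) (hi : i < b - a) :
    (sub T a b).getD i 0 = idx T (a + i) := by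
  simp only [sub, idx, List.getD_eq_getElem?_getD, List.getElem?_take, hi,
    if_pos, List.getElem?_drop]
  congr 2
  omega

lemma sub_length (T : List ℕ) {a b : ℕ} (ha : 1 ≤ a) (hb : b - 1 ≤ T.length) :
    (sub T a b).length = b - a := by
  simp only [sub, List.length_take, List.length_drop]
  omega



lemma per_isPeriod {S : List ℕ} (h : 1 ≤ S.length) : IsPeriod S (per S) :=
  Nat.sInf_mem (s := {p | IsPeriod S p})
    ⟨S.length, show IsPeriod S S.length from ⟨h, le_rfl, fun i hi => absurd hi (by omega)⟩⟩

lemma per_le {S : List ℕ} {p : ℕ} (h : IsPeriod S p) : per S ≤ p :=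
  Nat.sInf_le (show p ∈ {p | IsPeriod S p} from h)

section
variable {T : List ℕ} {τ j : ℕ}

lemma win_length (hτ : 1 ≤ τ) (h1 : 1 ≤ j) (h2 : j + 3*τ ≤ T.length + 2) :
    (sub T j (j + 3*τ - 1)).length = 3*τ - 1 := by
  rw [sub_length T h1 (by omega)]; omega

lemma win_getD (hτ : 1 ≤ τ) (h1 : 1 ≤ j) {a : ℕ} (ha : a < 3*τ - 1) :
    (sub T j (j + 3*τ - 1)).getD a 0 = idx T (j + a) :=
  sub_getD T h1 (by omega)

lemma win_period (hτ : 1 ≤ τ) (hj : j ∈ R T τ) {a : ℕ}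
    (ha : a + per (sub T j (j + 3*τ - 1)) < 3*τ - 1) :
    idx T (j + a) = idx T (j + a + per (sub T j (j + 3*τ - 1))) := by
  obtain ⟨h1, h2, h3⟩ := hj
  have hl := win_length hτ h1 h2
  have hp := per_isPeriod (S := sub T j (j + 3*τ - 1)) (by omega)
  have h := hp.2.2 a (by omega)
  rw [win_getD hτ h1 (by omega), win_getD hτ h1 (by omega)] at h
  rw [h, show j + (a + per (sub T j (j + 3*τ - 1))) = j + a + per (sub T j (j + 3*τ - 1)) from by omega]

lemma per_win_pos (hτ : 1 ≤ τ) (h1 : 1 ≤ j) (h2 : j + 3*τ ≤ T.length + 2) :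
    1 ≤ per (sub T j (j + 3*τ - 1)) := by
  have hl := win_length hτ h1 h2
  exact (per_isPeriod (by omega)).1

lemma rend_facts (hτ : 1 ≤ τ) (hj : j ∈ R T τ) :
    ∃ m0, rend T τ j = m0 + 3*τ - 2 ∧ j < m0 ∧ m0 + 3*τ ≤ T.length + 3 ∧ m0 ∉ R T τ ∧
      (∀ i, j ≤ i → i < m0 → i ∈ R T τ) := by
  obtain ⟨h1, h2, h3⟩ := hj
  have hne : (T.length + 3 - 3*τ) ∈ {j' | j ≤ j' ∧ j' ∉ R T τ} := by
    refine ⟨by omega, fun hc => ?_⟩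
    obtain ⟨_, hc2, _⟩ := hc
    omega
  have hmem : sInf {j' | j ≤ j' ∧ j' ∉ R T τ} ∈ {j' | j ≤ j' ∧ j' ∉ R T τ} :=
    Nat.sInf_mem ⟨_, hne⟩
  refine ⟨sInf {j' | j ≤ j' ∧ j' ∉ R T τ}, rfl, ?_, ?_, hmem.2, ?_⟩
  · rcases Nat.lt_or_ge j (sInf {j' | j ≤ j' ∧ j' ∉ R T τ}) with h | h
    · exact h
    · exact absurd (le_antisymm h hmem.1 ▸ hmem.2) (fun hc => hc ⟨h1, by omega, h3⟩)
  · have := Nat.sInf_le hne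
    omega
  · intro i hij hi
    by_contra hc
    have := Nat.sInf_le (show i ∈ {j' | j ≤ j' ∧ j' ∉ R T τ} from ⟨hij, hc⟩)
    omega

lemma rend_lb (hτ : 1 ≤ τ) (hj : j ∈ R T τ) : j + 3*τ - 1 ≤ rend T τ j := by
  obtain ⟨m0, he, h1, _, _, _⟩ := rend_facts hτ hj
  omega

lemma rend_ub (hτ : 1 ≤ τ) (hj : j ∈ R T τ) : rend T τ j ≤ T.length + 1 := by
  obtain ⟨m0, he, _, h2, _, _⟩ := rend_facts hτ hj
  omega

/-- Periodicity extends throughout the run. -/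
lemma run_period (hτ : 1 ≤ τ) (hj : j ∈ R T τ) :
    ∀ e, j + per (sub T j (j + 3*τ - 1)) ≤ e → e < rend T τ j →
      idx T (e - per (sub T j (j + 3*τ - 1))) = idx T e := by
  obtain ⟨m0, he, hjm, hm3, hm0, hrun⟩ := rend_facts hτ hj
  obtain ⟨h1, h2, h3⟩ := hj
  have hppos : 1 ≤ per (sub T j (j + 3*τ - 1)) := per_win_pos hτ h1 h2
  generalize hp : per (sub T j (j + 3*τ - 1)) = p at *
  intro e
  induction e using Nat.strong_induction_on with
  | _ e ih =>
    intro hle hlt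
    rcases Nat.lt_or_ge e (j + 3*τ - 1) with hcase | hcase
    · have h := win_period hτ ⟨h1, h2, by rw [hp]; exact h3⟩ (a := e - p - j) (by rw [hp]; omega)
      rw [hp, show j + (e - p - j) = e - p from by omega,
        show e - p + p = e from by omega] at h
      exact h
    · have hiR : e - (3*τ - 2) ∈ R T τ := hrun _ (by omega) (by omega)
      obtain ⟨hi1, hi2, hi3⟩ := hiR
      have hqpos : 1 ≤ per (sub T (e - (3*τ-2)) (e - (3*τ-2) + 3*τ - 1)) := per_win_pos hτ hi1 hi2
      generalize hq : per (sub T (e - (3*τ-2)) (e - (3*τ-2) + 3*τ - 1)) = q at *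
      have e1 : idx T (e - q) = idx T e := by
        have h := win_period hτ ⟨hi1, hi2, by rw [hq]; exact hi3⟩ (a := 3*τ - 2 - q) (by rw [hq]; omega)
        rw [hq, show e - (3*τ-2) + (3*τ - 2 - q) = e - q from by omega,
          show e - q + q = e from by omega] at h
        exact h
      have e2 : idx T (e - q - p) = idx T (e - q) :=
        ih (e - q) (by omega) (by omega) (by omega)
      have e3 : idx T (e - q - p) = idx T (e - p) := by
        have h := win_period hτ ⟨hi1, hi2, by rw [hq]; exact hi3⟩ (a := 3*τ - 2 - q - p) (by rw [hq]; omega)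
        rw [hq, show e - (3*τ-2) + (3*τ - 2 - q - p) = e - q - p from by omega,
          show e - q - p + q = e - p from by omega] at h
        exact h
      rw [← e1, ← e2, e3]

/-- The break at rend. -/
lemma break_ne (hτ : 1 ≤ τ) (hj : j ∈ R T τ) (hr : rend T τ j ≤ T.length) :
    idx T (rend T τ j) ≠ idx T (rend T τ j - per (sub T j (j + 3*τ - 1))) := by
  obtain ⟨m0, he, hjm, hm3, hm0, hrun⟩ := rend_facts hτ hj
  obtain ⟨h1, h2, h3⟩ := hj
  have hppos : 1 ≤ per (sub T j (j + 3*τ - 1)) := per_win_pos hτ h1 h2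
  generalize hp : per (sub T j (j + 3*τ - 1)) = p at *
  intro hcontra
  have hm2 : m0 + 3*τ ≤ T.length + 2 := by omega
  have hlw : (sub T m0 (m0 + 3*τ - 1)).length = 3*τ - 1 := win_length hτ (by omega) hm2
  have hper : IsPeriod (sub T m0 (m0 + 3*τ - 1)) p := by
    refine ⟨by omega, by omega, ?_⟩
    intro a ha
    rw [hlw] at ha
    rw [win_getD hτ (by omega) (by omega), win_getD hτ (by omega) (by omega),
      show m0 + (a + p) = m0 + a + p from by omega]
    rcases Nat.lt_or_ge (m0 + a + p) (rend T τ j) with hc | hc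
    · have h := run_period hτ ⟨h1, h2, by rw [hp]; exact h3⟩ (m0 + a + p) (by rw [hp]; omega) hc
      rw [hp, show m0 + a + p - p = m0 + a from by omega] at h
      exact h
    · have heq : m0 + a + p = rend T τ j := by omega
      rw [heq, show m0 + a = rend T τ j - p from by omega]
      exact hcontra.symm
  have hle := per_le hper
  exact absurd hm0 (fun hc => hc ⟨by omega, by omega, by omega⟩)
end


section
variable {T : List ℕ} {τ j : ℕ}
/-- rotations of the root inside the window -/
lemma sub_of_window (h1 : 1 ≤ j) {t p : ℕ} (htp : t + p ≤ 3*τ - 1) :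
    sub T (j + t) (j + t + p) = ((sub T j (j + 3*τ - 1)).drop t).take p := by
  unfold sub
  rw [List.drop_take, List.drop_drop, List.take_take,
    show j - 1 + t = j + t - 1 from by omega]
  congr 1
  omega

lemma lroot_mem (hτ : 1 ≤ τ) (hj : j ∈ R T τ) :
    ∃ t < per (sub T j (j + 3*τ - 1)),
      Lroot T τ j = sub T (j + t) (j + t + per (sub T j (j + 3*τ - 1))) := by
  obtain ⟨h1, h2, h3⟩ := hj
  have hppos : 1 ≤ per (sub T j (j + 3*τ - 1)) := per_win_pos hτ h1 h2
  set s := (Finset.range (per (sub T j (j + 3 * τ - 1)))).image fun t =>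
      sub T (j + t) (j + t + per (sub T j (j + 3 * τ - 1))) with hs
  have hne : s.Nonempty := ⟨_, Finset.mem_image_of_mem _ (Finset.mem_range.2 hppos)⟩
  have hmin : s.min = WithTop.some (s.min' hne) := (Finset.coe_min' hne).symm
  obtain ⟨t, ht, hteq⟩ := Finset.mem_image.1 (s.min'_mem hne)
  refine ⟨t, Finset.mem_range.1 ht, ?_⟩
  rw [Lroot, ← hs, hmin, ← hteq]
  rfl

lemma lroot_length (hτ : 1 ≤ τ) (hj : j ∈ R T τ) :
    (Lroot T τ j).length = per (sub T j (j + 3*τ - 1)) := by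
  obtain ⟨t, ht, heq⟩ := lroot_mem hτ hj
  obtain ⟨h1, h2, h3⟩ := hj
  rw [heq, sub_length T (by omega) (by omega)]
  omega

lemma lhead_spec (hτ : 1 ≤ τ) (hj : j ∈ R T τ) :
    Lhead T τ j < per (sub T j (j + 3*τ - 1)) ∧
      sub T (j + Lhead T τ j) (j + Lhead T τ j + per (sub T j (j + 3*τ - 1))) = Lroot T τ j := by
  obtain ⟨t, ht, heq⟩ := lroot_mem hτ hj
  exact Nat.sInf_mem (s := {s | s < per (sub T j (j + 3 * τ - 1)) ∧
    sub T (j + s) (j + s + per (sub T j (j + 3 * τ - 1))) = Lroot T τ j}) ⟨t, ht, heq.symm⟩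

/-- The character formula on the run. -/
lemma char_form (hτ : 1 ≤ τ) (hj : j ∈ R T τ) :
    ∀ i, i < rend T τ j - j →
      idx T (j + i) = (Lroot T τ j).getD
        ((per (sub T j (j + 3*τ - 1)) + i - Lhead T τ j) % per (sub T j (j + 3*τ - 1))) 0 := by
  have hj' := hj
  obtain ⟨h1, h2, h3⟩ := hj'
  obtain ⟨hs1, hs2⟩ := lhead_spec hτ hj
  have hppos : 1 ≤ per (sub T j (j + 3*τ - 1)) := per_win_pos hτ h1 h2
  have hrlb := rend_lb hτ hj
  have hrub := rend_ub hτ hj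
  have hrp := run_period hτ hj
  generalize hp : per (sub T j (j + 3*τ - 1)) = p at *
  generalize hsd : Lhead T τ j = s at *
  -- the direct middle case
  have mid : ∀ i, s ≤ i → i < s + p → idx T (j + i) = (Lroot T τ j).getD ((p + i - s) % p) 0 := by
    intro i hi1 hi2
    have hmod : (p + i - s) % p = i - s := by
      rw [Nat.mod_eq_sub_mod (by omega), Nat.mod_eq_of_lt (by omega)]
      omega
    rw [hmod, ← hs2, sub_getD T (by omega) (by omega),
      show j + s + (i - s) = j + i from by omega]
  intro i
  induction i using Nat.strong_induction_on with
  | _ i ih =>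
    intro hilt
    rcases Nat.lt_or_ge i s with hc1 | hc1
    · -- i < s : push forward by p
      have hper : idx T (j + i) = idx T (j + i + p) := by
        have := hrp (j + i + p) (by omega) (by omega)
        rw [show j + i + p - p = j + i from by omega] at this
        exact this
      have := mid (i + p) (by omega) (by omega)
      rw [show j + (i + p) = j + i + p from by omega] at this
      rw [hper, this, show p + (i + p) - s = (p + i - s) + p from by omega,
        Nat.add_mod_right]
    rcases Nat.lt_or_ge i (s + p) with hc2 | hc2
    · exact mid i hc1 hc2
    · -- i ≥ s + p : pull back by p
      have hper : idx T (j + (i - p)) = idx T (j + i) := by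
        have := hrp (j + i) (by omega) (by omega)
        rw [show j + i - p = j + (i - p) from by omega] at this
        exact this
      rw [← hper, ih (i - p) (by omega) (by omega),
        show p + i - s = (p + (i - p) - s) + p from by omega, Nat.add_mod_right]
end


end AuxLemmas

section MainLemmas
variable {T : List ℕ} {τ j j' s : ℕ} {H : List ℕ}

lemma typ_cases (T : List ℕ) (τ j : ℕ) : typ T τ j = 1 ∨ typ T τ j = -1 := by
  unfold typ; split
  · exact Or.inl rfl
  · exact Or.inr rfl

lemma typ_one_iff : typ T τ j = 1 ↔ (rend T τ j ≤ T.length ∧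
    idx T (rend T τ j - per (sub T j (j + 3*τ - 1))) < idx T (rend T τ j)) := by
  unfold typ; split
  · simp [*]
  · simp only [*, iff_false]
    norm_num

lemma typ_neg_iff : typ T τ j = -1 ↔ ¬ (rend T τ j ≤ T.length ∧
    idx T (rend T τ j - per (sub T j (j + 3*τ - 1))) < idx T (rend T τ j)) := by
  rcases typ_cases T τ j with h | h <;> rw [h]
  · rw [typ_one_iff] at h
    simp [h]
  · rw [← typ_one_iff]
    rw [h]
    norm_num

lemma per_eq_H (hτ : 1 ≤ τ) (hj : j ∈ RsH T τ s H) :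
    per (sub T j (j + 3*τ - 1)) = H.length := by
  rw [← hj.2.1]; exact (lroot_length hτ hj.1).symm

lemma s_lt_H (hτ : 1 ≤ τ) (hj : j ∈ RsH T τ s H) : s < H.length := by
  have := (lhead_spec hτ hj.1).1
  rw [per_eq_H hτ hj, hj.2.2] at this
  exact this

lemma charH (hτ : 1 ≤ τ) (hj : j ∈ RsH T τ s H) :
    ∀ i, i < rend T τ j - j →
      idx T (j + i) = H.getD ((H.length + i - s) % H.length) 0 := by
  intro i hi
  have h := char_form hτ hj.1 i hi
  rwa [per_eq_H hτ hj, hj.2.1, hj.2.2] at h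

lemma t_ge (hτ : 1 ≤ τ) (hj : j ∈ RsH T τ s H) : 3*τ - 1 ≤ rend T τ j - j := by
  have := rend_lb hτ hj.1
  have h1 : 1 ≤ j := hj.1.1
  omega

lemma H_le_t (hτ : 1 ≤ τ) (hj : j ∈ RsH T τ s H) : H.length ≤ rend T τ j - j := by
  have h3 : 3 * per (sub T j (j + 3*τ - 1)) ≤ τ := hj.1.2.2
  rw [per_eq_H hτ hj] at h3
  have := t_ge hτ hj
  omega

/-- ordering of the break character versus the periodic continuation -/
lemma break_typ (hτ : 1 ≤ τ) (hj : j ∈ RsH T τ s H) (hr : rend T τ j ≤ T.length) :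
    (typ T τ j = 1 →
      H.getD ((H.length + (rend T τ j - j) - s) % H.length) 0 < idx T (rend T τ j)) ∧
    (typ T τ j = -1 →
      idx T (rend T τ j) < H.getD ((H.length + (rend T τ j - j) - s) % H.length) 0) := by
  have hpH := per_eq_H hτ hj
  have hHt := H_le_t hτ hj
  have hsH := s_lt_H hτ hj
  have htg := t_ge hτ hj
  have hrlb := rend_lb hτ hj.1
  have h1 : 1 ≤ j := hj.1.1
  have hHpos : 1 ≤ H.length := by
    rw [← hpH]; exact per_win_pos hτ h1 hj.1.2.1
  have hb := break_ne hτ hj.1 hr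
  rw [hpH] at hb
  have hc : idx T (rend T τ j - H.length) =
      H.getD ((H.length + (rend T τ j - j) - s) % H.length) 0 := by
    have h := charH hτ hj (rend T τ j - j - H.length) (by omega)
    rw [show j + (rend T τ j - j - H.length) = rend T τ j - H.length from by omega] at h
    rw [h, show H.length + (rend T τ j - j) - s
        = (H.length + (rend T τ j - j - H.length) - s) + H.length from by omega,
      Nat.add_mod_right]
  constructor
  · intro ht
    obtain ⟨-, hlt⟩ := typ_one_iff.1 ht
    rw [hpH] at hlt
    rw [← hc]
    exact hlt
  · intro ht
    have hn := typ_neg_iff.1 ht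
    rw [hpH] at hn
    rw [← hc]
    rcases Nat.lt_or_ge (idx T (rend T τ j)) (idx T (rend T τ j - H.length)) with h | h
    · exact h
    · exact absurd ⟨hr, by omega⟩ hn

lemma lce_ge (hτ : 1 ≤ τ) (hj : j ∈ RsH T τ s H) (hj' : j' ∈ RsH T τ s H) :
    min (rend T τ j - j) (rend T τ j' - j') ≤ LCE T j j' := by
  have h1 : 1 ≤ j := hj.1.1
  have h1' : 1 ≤ j' := hj'.1.1
  have hub := rend_ub hτ hj.1
  have hub' := rend_ub hτ hj'.1
  apply le_lcp
  · rw [suf_length]; omega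
  · rw [suf_length]; omega
  · intro i hi
    rw [suf_getD T h1, suf_getD T h1', charH hτ hj i (by omega), charH hτ hj' i (by omega)]

/-- The core comparison lemma. -/
lemma core_cmp (hτ : 1 ≤ τ) (hj : j ∈ RsH T τ s H) (hj' : j' ∈ RsH T τ s H)
    (hcase :
      (typ T τ j = -1 ∧ typ T τ j' = -1 ∧ rend T τ j - j < rend T τ j' - j') ∨
      (typ T τ j = 1 ∧ typ T τ j' = 1 ∧ rend T τ j' - j' < rend T τ j - j) ∨
      (typ T τ j = -1 ∧ typ T τ j' = 1)) :
    suf T j < suf T j' ∧ LCE T j j' = min (rend T τ j - j) (rend T τ j' - j') := by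
  have h1 : 1 ≤ j := hj.1.1
  have h1' : 1 ≤ j' := hj'.1.1
  have hub := rend_ub hτ hj.1
  have hub' := rend_ub hτ hj'.1
  have hlb := rend_lb hτ hj.1
  have hlb' := rend_lb hτ hj'.1
  have hmin := lce_ge hτ hj hj'
  set t := rend T τ j - j with htdef
  set t' := rend T τ j' - j' with ht'def
  -- common characters
  have hcom : ∀ i, i < t → i < t' → (suf T j).getD i 0 = (suf T j').getD i 0 := by
    intro i hi hi'
    rw [suf_getD T h1, suf_getD T h1', charH hτ hj i hi, charH hτ hj' i hi']
  have hlenA : (suf T j).length = T.length + 1 - j := by rw [suf_length]; omega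
  have hlenB : (suf T j').length = T.length + 1 - j' := by rw [suf_length]; omega
  -- finisher: strict prefix
  have finish_prefix : rend T τ j = T.length + 1 → t ≤ t' → t < (suf T j').length →
      suf T j < suf T j' ∧ LCE T j j' = min t t' := by
    intro hrend htt' htB
    have hlA : (suf T j).length = t := by omega
    constructor
    · apply lex_lt_of_prefix (by omega)
      intro i hi
      exact hcom i (by omega) (by omega)
    · have h2 : LCE T j j' ≤ t := le_trans (lcp_le_left _ _) (by omega)
      omega
  -- finisher: differing character
  have finish_diff : ∀ k, k = min t t' →
      (suf T j).getD k 0 < (suf T j').getD k 0 →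
      k < (suf T j).length → k < (suf T j').length →
      suf T j < suf T j' ∧ LCE T j j' = min t t' := by
    intro k hk hlt ha hb
    refine ⟨lex_lt_of_getD (fun i hi => hcom i (by omega) (by omega)) ha hb hlt, ?_⟩
    have h2 : LCE T j j' ≤ k := lcp_le_of_ne (by omega)
    omega
  -- character values
  have hAin : ∀ i, i < t → (suf T j).getD i 0 = H.getD ((H.length + i - s) % H.length) 0 := by
    intro i hi
    rw [suf_getD T h1, charH hτ hj i hi]
  have hBin : ∀ i, i < t' → (suf T j').getD i 0 = H.getD ((H.length + i - s) % H.length) 0 := by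
    intro i hi
    rw [suf_getD T h1', charH hτ hj' i hi]
  have hAbr : (suf T j).getD t 0 = idx T (rend T τ j) := by
    rw [suf_getD T h1, show j + t = rend T τ j from by omega]
  have hBbr : (suf T j').getD t' 0 = idx T (rend T τ j') := by
    rw [suf_getD T h1', show j' + t' = rend T τ j' from by omega]
  rcases hcase with ⟨c1, c2, c3⟩ | ⟨c1, c2, c3⟩ | ⟨c1, c2⟩
  · -- both -1, t < t'
    rcases Nat.lt_or_ge (rend T τ j) (T.length + 1) with hr | hr
    · refine finish_diff t (by omega) ?_ (by omega) (by omega)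
      rw [hAbr, hBin t c3]
      have hA := (break_typ hτ hj (by omega)).2 c1
      rw [← htdef] at hA
      exact hA
    · exact finish_prefix (by omega) (by omega) (by omega)
  · -- both 1, t' < t
    have hr' : rend T τ j' ≤ T.length := (typ_one_iff.1 c2).1
    refine finish_diff t' (by omega) ?_ (by omega) (by omega)
    rw [hBbr, hAin t' c3]
    have hB := (break_typ hτ hj' hr').1 c2
    rw [← ht'def] at hB
    exact hB
  · -- -1 vs 1
    have hr' : rend T τ j' ≤ T.length := (typ_one_iff.1 c2).1
    rcases Nat.lt_or_ge t' t with h | h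
    · refine finish_diff t' (by omega) ?_ (by omega) (by omega)
      rw [hBbr, hAin t' h]
      have hB := (break_typ hτ hj' hr').1 c2
      rw [← ht'def] at hB
      exact hB
    · rcases Nat.lt_or_ge (rend T τ j) (T.length + 1) with hr | hr
      · refine finish_diff t (by omega) ?_ (by omega) (by omega)
        rw [hAbr]
        have hA := (break_typ hτ hj (by omega)).2 c1
        rw [← htdef] at hA
        rcases Nat.lt_or_ge t t' with h2 | h2
        · rw [hBin t h2]
          exact hA
        · have htt : t = t' := by omega
          rw [htt, hBbr]
          have hB := (break_typ hτ hj' hr').1 c2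
          rw [← ht'def, ← htt] at hB
          omega
      · exact finish_prefix (by omega) h (by omega)
end MainLemmas


/-- Lemma: structure of the SA-block of `R_{s,H}`. -/

theorem statement_1
    (σ n τ : ℕ) (T : List ℕ)
    (hσ : 2 ≤ σ) (hn : 2 ≤ n) (hτ : 1 ≤ τ)
    (hlen : T.length = n) (halph : ∀ c ∈ T, c < σ)
    (hlast : idx T n = 0) (huniq : ∀ i, 1 ≤ i → i < n → idx T i ≠ 0)
    (s : ℕ) (H : List ℕ) (j : ℕ) (hj : j ∈ RsH T τ s H) :
    (∀ j', 1 ≤ j' → j' ≤ n → (3 * τ - 1 ≤ LCE T j j' ↔ j' ∈ RsH T τ s H)) ∧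
    (∀ j' ∈ RsH T τ s H, ∀ t t' : ℕ,
      t = rend T τ j - j → t' = rend T τ j' - j' →
      min t t' ≤ LCE T j j' ∧
      (typ T τ j ≠ typ T τ j' → (suf T j < suf T j' ↔ typ T τ j < typ T τ j')) ∧
      (typ T τ j = -1 → typ T τ j' = -1 → t ≠ t' → (suf T j < suf T j' ↔ t < t')) ∧
      (typ T τ j = 1 → typ T τ j' = 1 → t ≠ t' → (suf T j < suf T j' ↔ t' < t)) ∧
      ((typ T τ j ≠ typ T τ j' ∨ t ≠ t') → LCE T j j' = min t t')) := by
  have h1j : 1 ≤ j := hj.1.1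
  constructor
  · intro j' h1' h2'
    constructor
    · intro hlce
      have hlce' : 3*τ - 1 ≤ lcp (suf T j) (suf T j') := hlce
      have hlB : 3*τ - 1 ≤ (suf T j').length := le_trans hlce' (lcp_le_right _ _)
      have hlenS : (suf T j').length = T.length + 1 - j' := by rw [suf_length]; omega
      have hb2 : j' + 3*τ ≤ T.length + 2 := by omega
      have hW : sub T j' (j' + 3*τ - 1) = sub T j (j + 3*τ - 1) := by
        have e1 : sub T j' (j' + 3*τ - 1) = (suf T j').take (3*τ - 1) := by
          unfold sub suf; congr 1; omega
        have e2 : sub T j (j + 3*τ - 1) = (suf T j).take (3*τ - 1) := by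
          unfold sub suf; congr 1; omega
        rw [e1, e2]
        exact take_eq_of_le_lcp
          (show 3*τ - 1 ≤ lcp (suf T j') (suf T j) from by rw [lcp_comm]; exact hlce')
      have hpe : per (sub T j' (j' + 3*τ - 1)) = per (sub T j (j + 3*τ - 1)) := by rw [hW]
      have hjR : j ∈ R T τ := hj.1
      have hR' : j' ∈ R T τ := ⟨h1', hb2, by rw [hW]; exact hjR.2.2⟩
      have hppos := per_win_pos hτ h1j hjR.2.1
      have h3p : 3 * per (sub T j (j + 3*τ - 1)) ≤ τ := hjR.2.2
      have hsub : ∀ x, x < per (sub T j (j + 3*τ - 1)) →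
          sub T (j' + x) (j' + x + per (sub T j (j + 3*τ - 1)))
            = sub T (j + x) (j + x + per (sub T j (j + 3*τ - 1))) := by
        intro x hx
        have e1 := sub_of_window (T := T) (τ := τ) (j := j') (t := x)
          (p := per (sub T j (j + 3*τ - 1))) h1' (by omega)
        have e2 := sub_of_window (T := T) (τ := τ) (j := j) (t := x)
          (p := per (sub T j (j + 3*τ - 1))) h1j (by omega)
        rw [e1, e2, hW]
      have hroot : Lroot T τ j' = Lroot T τ j := by
        unfold Lroot
        rw [hpe]
        congr 2
        apply Finset.image_congr
        intro x hx
        exact hsub x (Finset.mem_range.1 (Finset.mem_coe.1 hx))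
      have hhead : Lhead T τ j' = Lhead T τ j := by
        unfold Lhead
        rw [hpe, hroot]
        congr 1
        ext x
        simp only [Set.mem_setOf_eq]
        constructor
        · rintro ⟨hx, he⟩
          refine ⟨hx, ?_⟩
          rw [← hsub x hx]
          exact he
        · rintro ⟨hx, he⟩
          refine ⟨hx, ?_⟩
          rw [hsub x hx]
          exact he
      exact ⟨hR', hroot.trans hj.2.1, hhead.trans hj.2.2⟩
    · intro hmem
      have hge := lce_ge hτ hj hmem
      have t1 := t_ge hτ hj
      have t2 := t_ge hτ hmem
      omega
  · intro j' hmem t t' htdef ht'def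
    subst htdef ht'def
    refine ⟨lce_ge hτ hj hmem, ?_, ?_, ?_, ?_⟩
    · intro hne
      rcases typ_cases T τ j with ha | ha <;> rcases typ_cases T τ j' with hb | hb
      · exact absurd (ha.trans hb.symm) hne
      · have hc := core_cmp hτ hmem hj (Or.inr (Or.inr ⟨hb, ha⟩))
        rw [ha, hb]
        constructor
        · intro hlt
          exact absurd hc.1 (lt_asymm hlt)
        · intro hlt
          omega
      · have hc := core_cmp hτ hj hmem (Or.inr (Or.inr ⟨ha, hb⟩))
        rw [ha, hb]
        exact ⟨fun _ => by omega, fun _ => hc.1⟩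
      · exact absurd (ha.trans hb.symm) hne
    · intro ha hb hne
      rcases Nat.lt_or_ge (rend T τ j - j) (rend T τ j' - j') with h | h
      · have hc := core_cmp hτ hj hmem (Or.inl ⟨ha, hb, h⟩)
        exact ⟨fun _ => h, fun _ => hc.1⟩
      · have hlt' : rend T τ j' - j' < rend T τ j - j := by omega
        have hc := core_cmp hτ hmem hj (Or.inl ⟨hb, ha, hlt'⟩)
        constructor
        · intro hx
          exact absurd hc.1 (lt_asymm hx)
        · intro hx
          omega
    · intro ha hb hne
      rcases Nat.lt_or_ge (rend T τ j' - j') (rend T τ j - j) with h | h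
      · have hc := core_cmp hτ hj hmem (Or.inr (Or.inl ⟨ha, hb, h⟩))
        exact ⟨fun _ => h, fun _ => hc.1⟩
      · have hlt' : rend T τ j - j < rend T τ j' - j' := by omega
        have hc := core_cmp hτ hmem hj (Or.inr (Or.inl ⟨hb, ha, hlt'⟩))
        constructor
        · intro hx
          exact absurd hc.1 (lt_asymm hx)
        · intro hx
          omega
    · intro hor
      have hcomm : LCE T j j' = LCE T j' j := lcp_comm _ _
      rcases typ_cases T τ j with ha | ha <;> rcases typ_cases T τ j' with hb | hb
      · have hne : rend T τ j - j ≠ rend T τ j' - j' := by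
          rcases hor with h | h
          · exact absurd (ha.trans hb.symm) h
          · exact h
        rcases Nat.lt_or_ge (rend T τ j' - j') (rend T τ j - j) with h | h
        · exact (core_cmp hτ hj hmem (Or.inr (Or.inl ⟨ha, hb, h⟩))).2
        · have hc := core_cmp hτ hmem hj (Or.inr (Or.inl ⟨hb, ha, by omega⟩))
          rw [hcomm, Nat.min_comm]
          exact hc.2
      · have hc := core_cmp hτ hmem hj (Or.inr (Or.inr ⟨hb, ha⟩))
        rw [hcomm, Nat.min_comm]
        exact hc.2
      · exact (core_cmp hτ hj hmem (Or.inr (Or.inr ⟨ha, hb⟩))).2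
      · have hne : rend T τ j - j ≠ rend T τ j' - j' := by
          rcases hor with h | h
          · exact absurd (ha.trans hb.symm) h
          · exact h
        rcases Nat.lt_or_ge (rend T τ j - j) (rend T τ j' - j') with h | h
        · exact (core_cmp hτ hj hmem (Or.inl ⟨ha, hb, h⟩)).2
        · have hc := core_cmp hτ hmem hj (Or.inl ⟨hb, ha, by omega⟩)
          rw [hcomm, Nat.min_comm]
          exact hc.2
end CSA
end

section
/- For any j, j′ ∈ R′, if j ≠ j′ then rendfull(j) ≠ rendfull(j′). -/
open scoped Classical

namespace CSA

lemma idx_sub (T : List ℕ) (a b i : ℕ) (hi : i < b - a) :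
    (sub T a b).getD i 0 = T.getD (a - 1 + i) 0 := by
  unfold sub
  rw [List.getD_eq_getElem?_getD, List.getD_eq_getElem?_getD, List.getElem?_take,
    if_pos hi, List.getElem?_drop]

lemma window_getD (T : List ℕ) (τ a i : ℕ) (ha : 1 ≤ a) (hi : i < 3 * τ - 1) :
    (sub T a (a + 3 * τ - 1)).getD i 0 = idx T (a + i) := by
  rw [idx_sub T a (a + 3 * τ - 1) i (by omega)]
  unfold idx
  congr 1
  omega

lemma window_length (T : List ℕ) (τ a : ℕ) (hτ : 1 ≤ τ) (ha : 1 ≤ a)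
    (hb : a + 3 * τ ≤ T.length + 2) :
    (sub T a (a + 3 * τ - 1)).length = 3 * τ - 1 := by
  simp only [sub, List.length_take, List.length_drop]
  omega

lemma window_per_spec (T : List ℕ) (τ a : ℕ) (hτ : 1 ≤ τ) (ha : 1 ≤ a)
    (hb : a + 3 * τ ≤ T.length + 2) :
    1 ≤ per (sub T a (a + 3 * τ - 1)) ∧ per (sub T a (a + 3 * τ - 1)) ≤ 3 * τ - 1 ∧
    ∀ x, a ≤ x → x + per (sub T a (a + 3 * τ - 1)) < a + (3 * τ - 1) →
      idx T x = idx T (x + per (sub T a (a + 3 * τ - 1))) := by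
  have hlen := window_length T τ a hτ ha hb
  have hne : IsPeriod (sub T a (a + 3 * τ - 1)) (3 * τ - 1) := by
    refine ⟨by omega, by rw [hlen], fun i hi => ?_⟩
    rw [hlen] at hi
    omega
  have hmem : IsPeriod (sub T a (a + 3 * τ - 1)) (per (sub T a (a + 3 * τ - 1))) :=
    Nat.sInf_mem (⟨3 * τ - 1, hne⟩ : {p | IsPeriod (sub T a (a + 3 * τ - 1)) p}.Nonempty)
  obtain ⟨h1, h2, h3⟩ := hmem
  rw [hlen] at h2
  refine ⟨h1, h2, fun x hx hxb => ?_⟩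
  have hi := h3 (x - a) (by rw [hlen]; omega)
  rw [window_getD T τ a (x - a) ha (by omega),
      window_getD T τ a (x - a + per (sub T a (a + 3 * τ - 1))) ha (by omega)] at hi
  rw [show a + (x - a) = x by omega,
      show a + (x - a + per (sub T a (a + 3 * τ - 1))) = x + per (sub T a (a + 3 * τ - 1)) by omega] at hi
  exact hi

lemma isPeriod_window (T : List ℕ) (τ a r : ℕ) (hτ : 1 ≤ τ) (ha : 1 ≤ a)
    (hb : a + 3 * τ ≤ T.length + 2) (hr1 : 1 ≤ r) (hr2 : r ≤ 3 * τ - 1)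
    (h : ∀ x, a ≤ x → x + r < a + (3 * τ - 1) → idx T x = idx T (x + r)) :
    IsPeriod (sub T a (a + 3 * τ - 1)) r := by
  have hlen := window_length T τ a hτ ha hb
  refine ⟨hr1, by rw [hlen]; exact hr2, fun i hi => ?_⟩
  rw [hlen] at hi
  rw [window_getD T τ a i ha (by omega), window_getD T τ a (i + r) ha (by omega)]
  have := h (a + i) (by omega) (by omega)
  rwa [show a + i + r = a + (i + r) by omega] at this

lemma fw_aux (f : ℕ → ℕ) : ∀ N p q a len, p + q ≤ N → 1 ≤ p → p ≤ q → p + q ≤ len →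
    (∀ x, a ≤ x → x + p < a + len → f x = f (x + p)) →
    (∀ x, a ≤ x → x + q < a + len → f x = f (x + q)) →
    ∀ x, a ≤ x → x + Nat.gcd p q < a + len → f x = f (x + Nat.gcd p q) := by
  intro N
  induction N with
  | zero => intro p q a len hN hp1 _ _ _ _; omega
  | succ N ih =>
    intro p q a len hN hp1 hpq hlen hp hq
    rcases eq_or_lt_of_le hpq with rfl | hlt
    · intro x hx hxg
      rw [Nat.gcd_self] at hxg ⊢
      exact hp x hx hxg
    · -- p < q
      have hgcd : Nat.gcd p q = Nat.gcd p (q - p) := (Nat.gcd_sub_self_right (le_of_lt hlt)).symm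
      -- periods p and q - p on [a+p, a+len)
      have hP : ∀ x, a + p ≤ x → x + p < (a + p) + (len - p) → f x = f (x + p) := by
        intro x h1 h2
        exact hp x (by omega) (by omega)
      have hQP : ∀ x, a + p ≤ x → x + (q - p) < (a + p) + (len - p) → f x = f (x + (q - p)) := by
        intro x h1 h2
        obtain ⟨y, rfl⟩ : ∃ y, x = y + p := ⟨x - p, by omega⟩
        have e1 := hp y (by omega) (by omega)
        have e2 := hq y (by omega) (by omega)
        rw [show y + p + (q - p) = y + q by omega]
        exact e1.symm.trans e2
      have inner : ∀ x, a + p ≤ x → x + Nat.gcd p (q - p) < (a + p) + (len - p) →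
          f x = f (x + Nat.gcd p (q - p)) := by
        rcases le_total p (q - p) with hord | hord
        · exact ih p (q - p) (a + p) (len - p) (by omega) hp1 hord (by omega) hP hQP
        · have := ih (q - p) p (a + p) (len - p) (by omega) (by omega) hord (by omega) hQP hP
          rwa [Nat.gcd_comm (q - p) p] at this
      intro x hx hxg
      rw [hgcd] at hxg ⊢
      set g := Nat.gcd p (q - p) with hg
      have hgp : g ∣ p := Nat.gcd_dvd_left _ _
      have hgq : g ∣ q - p := Nat.gcd_dvd_right _ _
      have hg1 : 1 ≤ g := Nat.gcd_pos_of_pos_left _ (by omega)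
      have hgle : g ≤ q - p := Nat.le_of_dvd (by omega) hgq
      have hgle2 : g ≤ p := Nat.le_of_dvd (by omega) hgp
      rcases le_or_gt (a + p) x with hcase | hcase
      · exact inner x hcase (by omega)
      · have e1 : f x = f (x + p) := hp x hx (by omega)
        have e2 : f (x + p) = f (x + p + g) := inner (x + p) (by omega) (by omega)
        have e3 : f (x + g) = f (x + g + p) := hp (x + g) (by omega) (by omega)
        rw [show x + g + p = x + p + g by omega] at e3
        exact (e1.trans e2).trans e3.symm

lemma fw (f : ℕ → ℕ) (p q a len : ℕ) (hp1 : 1 ≤ p) (hq1 : 1 ≤ q) (hlen : p + q ≤ len)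
    (hp : ∀ x, a ≤ x → x + p < a + len → f x = f (x + p))
    (hq : ∀ x, a ≤ x → x + q < a + len → f x = f (x + q)) :
    ∀ x, a ≤ x → x + Nat.gcd p q < a + len → f x = f (x + Nat.gcd p q) := by
  rcases le_total p q with h | h
  · exact fw_aux f (p + q) p q a len le_rfl hp1 h hlen hp hq
  · have := fw_aux f (p + q) q p a len (by omega) hq1 h (by omega) hq hp
    intro x hx hxg
    rw [Nat.gcd_comm p q] at hxg ⊢
    exact this x hx hxg

lemma ext_period (f : ℕ → ℕ) (a M L Q g : ℕ) (hLq : Q + g ≤ L) (hML : M + 1 ≤ L + Q)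
    (hQ : ∀ x, a ≤ x → x + Q < a + M → f x = f (x + Q))
    (hg : ∀ x, a ≤ x → x + g < a + L → f x = f (x + g)) :
    ∀ x, a ≤ x → x + g < a + M → f x = f (x + g) := by
  intro x hx hxg
  rcases lt_or_ge (x + g) (a + L) with h | h
  · exact hg x hx (by omega)
  · obtain ⟨y, rfl⟩ : ∃ y, x = y + Q := ⟨x - Q, by omega⟩
    have e1 : f y = f (y + Q) := hQ y (by omega) (by omega)
    have e2 : f (y + g) = f (y + g + Q) := hQ (y + g) (by omega) (by omega)
    have e3 : f y = f (y + g) := hg y (by omega) (by omega)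
    rw [show y + Q + g = y + g + Q by omega]
    exact (e1.symm.trans e3).trans e2

lemma chain_down (f : ℕ → ℕ) (b p B : ℕ) (hp : 1 ≤ p)
    (hstep : ∀ x, b + 1 ≤ x → x + p < B → f x = f (x + p)) :
    ∀ k, b + p * k + 2 * p < B → f (b + p * k + p) = f (b + p) := by
  intro k
  induction k with
  | zero => intro _; simp
  | succ k ih =>
    intro hB
    rw [Nat.mul_succ] at hB ⊢
    have e1 : f (b + p * k + p) = f (b + p * k + p + p) :=
      hstep (b + p * k + p) (by omega) (by omega)
    rw [show b + (p * k + p) + p = b + p * k + p + p by omega]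
    exact e1.symm.trans (ih (by omega))


/-- Lemma: injectivity of `rendfull` on `R′`. -/
theorem statement_4
    (σ n τ : ℕ) (T : List ℕ)
    (hσ : 2 ≤ σ) (hn : 2 ≤ n) (hτ : 1 ≤ τ)
    (hlen : T.length = n) (halph : ∀ c ∈ T, c < σ)
    (hlast : idx T n = 0) (huniq : ∀ i, 1 ≤ i → i < n → idx T i ≠ 0)
    : ∀ j ∈ Rprime T τ, ∀ j' ∈ Rprime T τ, j ≠ j' →
      rendfull T τ j ≠ rendfull T τ j' := by
  have key : ∀ j ∈ Rprime T τ, ∀ j' ∈ Rprime T τ, j < j' →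
      rendfull T τ j ≠ rendfull T τ j' := by
    intro j hj j' hj' hjj hEq
    obtain ⟨hjR, hjpre⟩ := hj
    obtain ⟨hj'R, hj'pre⟩ := hj'
    obtain ⟨hj1, hj2, hj3⟩ := hjR
    obtain ⟨hj'1, hj'2, hj'3⟩ := hj'R
    set f : ℕ → ℕ := fun x => idx T x with hf
    -- the run of j
    have hS1ne : {k | j ≤ k ∧ k ∉ R T τ}.Nonempty := by
      refine ⟨T.length + 1, by omega, fun hc => ?_⟩
      obtain ⟨_, h2, _⟩ := hc
      omega
    set m := sInf {k | j ≤ k ∧ k ∉ R T τ} with hm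
    have hmS : j ≤ m ∧ m ∉ R T τ := Nat.sInf_mem hS1ne
    have hmj : j < m := by
      rcases eq_or_lt_of_le hmS.1 with h | h
      · exact absurd (h ▸ ⟨hj1, hj2, hj3⟩ : m ∈ R T τ) hmS.2
      · exact h
    have hk0R : (m - 1) ∈ R T τ := by
      by_contra hc
      exact Nat.notMem_of_lt_sInf (show m - 1 < m by omega) ⟨by omega, hc⟩
    obtain ⟨hk01, hk02, hk03⟩ := hk0R
    have hmj' : m ≤ j' - 1 := Nat.sInf_le ⟨by omega, hj'pre⟩
    have hrj : rend T τ j = m + 3 * τ - 2 := rfl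
    -- the run of j'
    have hS2ne : {k | j' ≤ k ∧ k ∉ R T τ}.Nonempty := by
      refine ⟨T.length + 1, by omega, fun hc => ?_⟩
      obtain ⟨_, h2, _⟩ := hc
      omega
    set m' := sInf {k | j' ≤ k ∧ k ∉ R T τ} with hm'
    have hm'S : j' ≤ m' ∧ m' ∉ R T τ := Nat.sInf_mem hS2ne
    have hm'j : j' < m' := by
      rcases eq_or_lt_of_le hm'S.1 with h | h
      · exact absurd (h ▸ ⟨hj'1, hj'2, hj'3⟩ : m' ∈ R T τ) hm'S.2
      · exact h
    have hrj' : rend T τ j' = m' + 3 * τ - 2 := rfl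
    -- periods
    set q := per (sub T (m - 1) (m - 1 + 3 * τ - 1)) with hq
    set p' := per (sub T j' (j' + 3 * τ - 1)) with hp'
    have h3q : 3 * q ≤ τ := hk03
    have h3p' : 3 * p' ≤ τ := hj'3
    obtain ⟨hq1, hq2, hqper⟩ := window_per_spec T τ (m - 1) hτ (by omega) hk02
    obtain ⟨hp'1, hp'2, hp'per⟩ := window_per_spec T τ j' hτ (by omega) hj'2
    rw [← hq] at hq1 hq2 hqper
    rw [← hp'] at hp'1 hp'2 hp'per
    -- rendfull bounds
    have hLt : Ltail T τ j' < p' := Nat.mod_lt _ (by omega)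
    have hEdef' : rendfull T τ j' = rend T τ j' - Ltail T τ j' := rfl
    have hEdef : rendfull T τ j ≤ rend T τ j := Nat.sub_le _ _
    set E := rendfull T τ j' with hE
    have hElb : j' + 3 * τ ≤ E + p' := by omega
    have hEub : E + 3 ≤ j' + 3 * τ := by
      rw [← hEq]
      omega
    -- q is a period of [j', E)
    have hqE : ∀ x, j' ≤ x → x + q < j' + (E - j') → f x = f (x + q) := by
      intro x h1 h2
      refine hqper x (by omega) (by omega)
    -- p' is a period of [j', E) and of the whole window at j'
    have hp'W : ∀ x, j' ≤ x → x + p' < j' + (3 * τ - 1) → f x = f (x + p') := hp'per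
    have hp'E : ∀ x, j' ≤ x → x + p' < j' + (E - j') → f x = f (x + p') := by
      intro x h1 h2
      exact hp'W x h1 (by omega)
    -- Fine and Wilf on [j', E)
    set g := Nat.gcd q p' with hg
    have hgE : ∀ x, j' ≤ x → x + g < j' + (E - j') → f x = f (x + g) :=
      fw f q p' j' (E - j') (by omega) (by omega) (by omega) hqE hp'E
    have hgle : g ≤ p' := Nat.gcd_le_right _ (by omega)
    have hg1 : 1 ≤ g := Nat.gcd_pos_of_pos_left _ (by omega)
    -- extend g-periodicity to the whole window at j'
    have hgW : ∀ x, j' ≤ x → x + g < j' + (3 * τ - 1) → f x = f (x + g) :=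
      ext_period f j' (3 * τ - 1) (E - j') p' g (by omega) (by omega) hp'W hgE
    -- minimality of p' forces g = p', hence p' ∣ q
    have hgP : IsPeriod (sub T j' (j' + 3 * τ - 1)) g :=
      isPeriod_window T τ j' g hτ (by omega) hj'2 hg1 (by omega) hgW
    have hple : p' ≤ g := Nat.sInf_le hgP
    have hgp' : g = p' := le_antisymm hgle hple
    have hdvd : p' ∣ q := hgp' ▸ Nat.gcd_dvd_left q p'
    obtain ⟨c, hc⟩ := hdvd
    have hc1 : 1 ≤ c := by
      rcases Nat.eq_zero_or_pos c with rfl | h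
      · omega
      · exact h
    -- T[j'-1] = T[j'-1+q] via the window at m-1
    have hstart : f (j' - 1) = f (j' - 1 + q) :=
      hqper (j' - 1) (by omega) (by omega)
    -- reduce q to p' using p' ∣ q
    have hstep : ∀ x, (j' - 1) + 1 ≤ x → x + p' < j' + (3 * τ - 1) → f x = f (x + p') := by
      intro x h1 h2
      exact hp'W x (by omega) h2
    have hchain := chain_down f (j' - 1) p' (j' + (3 * τ - 1)) (by omega) hstep (c - 1)
      (by
        have : p' * (c - 1) + p' = p' * c := by
          rw [← Nat.mul_succ]
          congr 1
          omega
        omega)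
    have hqc : p' * (c - 1) + p' = q := by
      rw [hc, ← Nat.mul_succ]
      congr 1
      omega
    rw [show j' - 1 + p' * (c - 1) + p' = j' - 1 + q by omega] at hchain
    have hfinal : f (j' - 1) = f (j' - 1 + p') := hstart.trans hchain
    -- the window at j'-1 has period p'
    have hwin : ∀ x, j' - 1 ≤ x → x + p' < (j' - 1) + (3 * τ - 1) → f x = f (x + p') := by
      intro x h1 h2
      rcases eq_or_lt_of_le h1 with h | h
      · rw [← h]; exact hfinal
      · exact hp'W x (by omega) (by omega)
    have hwinP : IsPeriod (sub T (j' - 1) (j' - 1 + 3 * τ - 1)) p' := by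
      exact isPeriod_window T τ (j' - 1) p' hτ (by omega) (by omega) (by omega) (by omega) hwin
    have hcontra : (j' - 1) ∈ R T τ := by
      refine ⟨by omega, by omega, ?_⟩
      have hle : per (sub T (j' - 1) (j' - 1 + 3 * τ - 1)) ≤ p' := Nat.sInf_le hwinP
      omega
    exact hj'pre hcontra
  intro j hj j' hj' hne
  rcases lt_or_gt_of_ne hne with h | h
  · exact key j hj j' hj' h
  · exact fun e => key j' hj' j hj h e.symm
end CSA
end
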